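/- Let w be a word in the free monoid on L, R, with associated matrix M(w) = [[a,b],[c,d]] ∈ SL₂(ℕ) (where L ↦ [[1,1],[0,1]], R ↦ [[1,0],[1,1]]) and associated sequence σ(w) = (s₁,…,s_m) ∈ 𝔖 (where L ↦ (2), R ↦ (1,2) under the composition law (s₁,…,s_m)∘(t₁,…,t_n) = (s₁,…,s_{m−1}, s_m−1+t₁, t₂,…,t_n)). Then the continued fraction [s₁,…,s_m] equals (a+b)/(c+d). -/

import Mathlib

open Matrix

/-- The generator `L = [[1,1],[0,1]]`. -/
def Lmat : Matrix (Fin 2) (Fin 2) ℤ := !![1, 1; 0, 1]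

/-- The generator `R = [[1,0],[1,1]]`. -/
def Rmat : Matrix (Fin 2) (Fin 2) ℤ := !![1, 0; 1, 1]

/-- The matrix associated to a word (`false ↦ L`, `true ↦ R`). -/
def wordToMat (w : List Bool) : Matrix (Fin 2) (Fin 2) ℤ :=
  (w.map (fun b => if b then Rmat else Lmat)).prod

/-- The composition law on sequences:
`(s₁,…,s_m) ∘ (t₁,…,t_n) = (s₁,…,s_{m−1}, s_m−1+t₁, t₂,…,t_n)`. -/
def compS (s t : List ℤ) : List ℤ :=
  if s = [] then t
  else if t = [] then s
  else s.dropLast ++ (s.getLast! - 1 + t.head!) :: t.tail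

/-- The sequence associated to a word, via `L ↦ (2)`, `R ↦ (1,2)`. -/
def wordToSeq (w : List Bool) : List ℤ :=
  (w.map (fun b => if b then [(1 : ℤ), 2] else [(2 : ℤ)])).foldr compS []

/-- The Hirzebruch–Jung continued fraction `[s₁,…,s_m] = s₁ − 1/(s₂ − 1/(⋯))`. -/
def hj : List ℤ → ℚ
  | [] => 0
  | s :: t => (s : ℚ) - 1 / hj t

lemma wordToMat_cons (b : Bool) (w : List Bool) :
    wordToMat (b :: w) = (if b then Rmat else Lmat) * wordToMat w := by
  simp [wordToMat]

lemma matPos (w : List Bool) :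
    0 ≤ wordToMat w 0 0 ∧ 0 ≤ wordToMat w 0 1 ∧ 0 ≤ wordToMat w 1 0 ∧
      0 ≤ wordToMat w 1 1 ∧ 1 ≤ wordToMat w 0 0 + wordToMat w 0 1 ∧
      1 ≤ wordToMat w 1 0 + wordToMat w 1 1 := by
  induction w with
  | nil => simp [wordToMat]
  | cons b w ih =>
    rw [wordToMat_cons]
    obtain ⟨h1, h2, h3, h4, h5, h6⟩ := ih
    cases b <;>
      simp [Lmat, Rmat, Matrix.mul_apply, Fin.sum_univ_two] <;>
      refine ⟨by linarith, by linarith, by linarith, by linarith, by linarith, by linarith⟩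

lemma seq_ne_nil (w : List Bool) (hw : w ≠ []) : wordToSeq w ≠ [] := by
  induction w with
  | nil => simp at hw
  | cons b w ih =>
    have : wordToSeq (b :: w) =
        compS (if b then [(1:ℤ), 2] else [(2:ℤ)]) (wordToSeq w) := by
      simp [wordToSeq]
    rw [this]
    rcases eq_or_ne w [] with rfl | hw'
    · cases b <;> simp [wordToSeq, compS]
    · have := ih hw'
      obtain ⟨h, tl, hseq⟩ := List.exists_cons_of_ne_nil this
      cases b <;> simp [compS, hseq]

lemma wordToSeq_cons (b : Bool) (w : List Bool) :
    wordToSeq (b :: w) = compS (if b then [(1:ℤ), 2] else [(2:ℤ)]) (wordToSeq w) := by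
  simp [wordToSeq]

/-- For a nonempty word `w` with associated matrix `[[a,b],[c,d]]` and associated
sequence `(s₁,…,s_m)`, the continued fraction `[s₁,…,s_m]` equals `(a+b)/(c+d)`. -/
theorem hj_wordToSeq_eq_frac (w : List Bool) (hw : w ≠ []) :
    hj (wordToSeq w) =
      ((wordToMat w 0 0 + wordToMat w 0 1 : ℤ) : ℚ) /
        ((wordToMat w 1 0 + wordToMat w 1 1 : ℤ) : ℚ) := by
  induction w with
  | nil => exact absurd rfl hw
  | cons b w ih =>
    rcases eq_or_ne w [] with rfl | hw'
    · cases b <;>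
        simp [wordToSeq, wordToMat, compS, hj, Lmat, Rmat] <;> norm_num
    · obtain ⟨h1, h2, h3, h4, h5, h6⟩ := matPos w
      obtain ⟨h, tl, hseq⟩ := List.exists_cons_of_ne_nil (seq_ne_nil w hw')
      have ihx := ih hw'
      rw [hseq] at ihx
      set a := wordToMat w 0 0 with ha
      set b' := wordToMat w 0 1 with hb
      set c := wordToMat w 1 0 with hc
      set d := wordToMat w 1 1 with hd
      have hcd : ((c : ℚ) + d) ≠ 0 := by
        have : (1 : ℚ) ≤ (c : ℚ) + d := by exact_mod_cast h6
        linarith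
      have hab : (0 : ℚ) < (a : ℚ) + b' := by
        have : (1 : ℚ) ≤ (a : ℚ) + b' := by exact_mod_cast h5
        linarith
      have hcd' : (0 : ℚ) < (c : ℚ) + d := by
        have : (1 : ℚ) ≤ (c : ℚ) + d := by exact_mod_cast h6
        linarith
      have hx : hj (h :: tl) = ((a : ℚ) + b') / ((c : ℚ) + d) := by
        rw [ihx]; push_cast; ring
      rw [wordToSeq_cons, hseq, wordToMat_cons]
      cases b
      · simp only [Bool.false_eq_true, if_false, Lmat]
        have hs : compS [(2:ℤ)] (h :: tl) = (2 - 1 + h) :: tl := by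
          simp [compS, List.getLast!]
        rw [hs]
        have : hj ((2 - 1 + h) :: tl) = 1 + hj (h :: tl) := by
          simp [hj]; push_cast; ring
        rw [this, hx]
        simp only [Matrix.mul_apply, Fin.sum_univ_two, Matrix.cons_val_zero,
          Matrix.cons_val_one, Matrix.head_cons, Matrix.head_fin_const, Matrix.of_apply, ← ha, ← hb, ← hc, ← hd]
        push_cast
        field_simp [hcd]
        ring
      · simp only [if_true, Rmat]
        have hs : compS [(1:ℤ), 2] (h :: tl) = 1 :: (2 - 1 + h) :: tl := by
          simp [compS, List.getLast!]
        rw [hs]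
        have h1' : hj ((2 - 1 + h) :: tl) = 1 + hj (h :: tl) := by
          simp [hj]; push_cast; ring
        have : hj ((1:ℤ) :: (2 - 1 + h) :: tl) = 1 - 1 / (1 + hj (h :: tl)) := by
          rw [show hj ((1:ℤ) :: (2 - 1 + h) :: tl) =
            (1 : ℚ) - 1 / hj ((2 - 1 + h) :: tl) from rfl, h1']
        rw [this, hx]
        simp only [Matrix.mul_apply, Fin.sum_univ_two, Matrix.cons_val_zero,
          Matrix.cons_val_one, Matrix.head_cons, Matrix.head_fin_const, Matrix.of_apply, ← ha, ← hb, ← hc, ← hd]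
        have hden : (1 : ℚ) + ((a : ℚ) + b') / ((c : ℚ) + d) ≠ 0 := by
          have : (0 : ℚ) < ((a : ℚ) + b') / ((c : ℚ) + d) := div_pos hab hcd'
          linarith
        push_cast
        rw [one_add_div hcd, one_div_div]
        have hX : (c : ℚ) + d + ((a : ℚ) + b') ≠ 0 := by
          have := hab; have := hcd'; intro hcon; linarith
        have hY : ((a : ℚ) + b' + ↑c + ↑d) ≠ 0 := by
          intro hcon; linarith
        have hZ : ((a : ℚ) + ↑c + (↑b' + ↑d)) ≠ 0 := by
          intro hcon; linarith
        field_simp [hX, hY, hZ]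
        ring
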